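/- Rigidity of Sasakian structures: if (φ,Q,ξ,η,g) is a weak Sasakian structure on M (i.e., a weak contact metric structure with N⁽¹⁾ ≡ 0), then Q is ν times the identity on every tangent space: Q_x = ν·id_{T_xM} for every x ∈ M. Consequently φ' := ν^{-1/2}·φ and g' := ν^{1/2}·(g - η⊗η) + η⊗η define a (classical) Sasakian structure (φ',ξ,η,g') on M, so the weak Sasakian structure is homothetically equivalent to a Sasakian structure. -/

import Mathlib

open scoped Manifold

noncomputable section

/-- Smooth vector fields on a manifold `M`, modelled as derivations of the algebra of smooth
real-valued functions on `M`. -/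
abbrev VectorField {E : Type*} [NormedAddCommGroup E] [NormedSpace ℝ E]
    {H : Type*} [TopologicalSpace H] (I : ModelWithCorners ℝ E H)
    (M : Type*) [TopologicalSpace M] [ChartedSpace H M] :=
  Derivation ℝ C^(⊤ : ℕ∞)⟮I, M; ℝ⟯ C^(⊤ : ℕ∞)⟮I, M; ℝ⟯

variable {E : Type*} [NormedAddCommGroup E] [NormedSpace ℝ E]
  {H : Type*} [TopologicalSpace H] {I : ModelWithCorners ℝ E H}
  {M : Type*} [TopologicalSpace M] [ChartedSpace H M]

/-- `dη(X,Y) = ½ (X(η(Y)) - Y(η(X)) - η([X,Y]))`. -/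
def dEta (η : VectorField I M →ₗ[C^(⊤ : ℕ∞)⟮I, M; ℝ⟯] C^(⊤ : ℕ∞)⟮I, M; ℝ⟯)
    (X Y : VectorField I M) : C^(⊤ : ℕ∞)⟮I, M; ℝ⟯ :=
  (2 : ℝ)⁻¹ • (X (η Y) - Y (η X) - η ⁅X, Y⁆)

/-- The Nijenhuis torsion `[φ,φ](X,Y) = φ²[X,Y] + [φX,φY] - φ[φX,Y] - φ[X,φY]`. -/
def nijenhuis (φ : VectorField I M → VectorField I M) (X Y : VectorField I M) :
    VectorField I M :=
  φ (φ ⁅X, Y⁆) + ⁅φ X, φ Y⁆ - φ ⁅φ X, Y⁆ - φ ⁅X, φ Y⁆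

/-- `N⁽¹⁾(X,Y) = [φ,φ](X,Y) + 2 dη(X,Y) Qξ`. -/
def N1 (φ Q : VectorField I M →ₗ[C^(⊤ : ℕ∞)⟮I, M; ℝ⟯] VectorField I M)
    (ξ : VectorField I M) (η : VectorField I M →ₗ[C^(⊤ : ℕ∞)⟮I, M; ℝ⟯] C^(⊤ : ℕ∞)⟮I, M; ℝ⟯)
    (X Y : VectorField I M) : VectorField I M :=
  nijenhuis ⇑φ X Y + ((2 : ℝ) • dEta η X Y) • Q ξ

/-- `N⁽²⁾(X,Y) = (φX)(η(Y)) - η([φX,Y]) - (φY)(η(X)) + η([φY,X])`. -/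
def N2 (φ : VectorField I M →ₗ[C^(⊤ : ℕ∞)⟮I, M; ℝ⟯] VectorField I M)
    (η : VectorField I M →ₗ[C^(⊤ : ℕ∞)⟮I, M; ℝ⟯] C^(⊤ : ℕ∞)⟮I, M; ℝ⟯)
    (X Y : VectorField I M) : C^(⊤ : ℕ∞)⟮I, M; ℝ⟯ :=
  (φ X) (η Y) - η ⁅φ X, Y⁆ - (φ Y) (η X) + η ⁅φ Y, X⁆

set_option maxHeartbeats 16000000 in
theorem weak_Sasakian_rigidity
    [FiniteDimensional ℝ E] [I.Boundaryless] [IsManifold I ((⊤ : ℕ∞) : WithTop ℕ∞) M]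
    (n : ℕ) (hn : 1 ≤ n) (hdim : Module.finrank ℝ E = 2 * n + 1)
    (φ Q : VectorField I M →ₗ[C^(⊤ : ℕ∞)⟮I, M; ℝ⟯] VectorField I M)
    (hQ : Function.Bijective Q)
    (ξ : VectorField I M)
    (η : VectorField I M →ₗ[C^(⊤ : ℕ∞)⟮I, M; ℝ⟯] C^(⊤ : ℕ∞)⟮I, M; ℝ⟯)
    (g : VectorField I M →ₗ[C^(⊤ : ℕ∞)⟮I, M; ℝ⟯] VectorField I M →ₗ[C^(⊤ : ℕ∞)⟮I, M; ℝ⟯] C^(⊤ : ℕ∞)⟮I, M; ℝ⟯)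
    (ν : ℝ) (hν : 0 < ν)
    (hφφ : ∀ X, φ (φ X) = -(Q X) + η X • Q ξ)
    (hηξ : η ξ = 1)
    (hQξ : Q ξ = ν • ξ)
    (hD : ∀ X, η X = 0 → η (φ X) = 0)
    (hg_symm : ∀ X Y, g X Y = g Y X)
    (hg_pos : ∀ X (x : M), 0 ≤ g X X x)
    (hg_def : ∀ X, g X X = 0 → X = 0)
    (hcompat : ∀ X Y, g (φ X) (φ Y) = g X (Q Y) - η X * η (Q Y))
    (hcontact : ∀ X Y, g X (φ Y) = dEta η X Y)
    (hN1 : ∀ X Y, N1 φ Q ξ η X Y = 0)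
    :
    (∀ X, Q X = ν • X) ∧
    (∀ X, (Real.sqrt ν)⁻¹ • φ ((Real.sqrt ν)⁻¹ • φ X) = -X + η X • ξ) ∧
    (∀ X Y, (Real.sqrt ν • (g X Y - η X * η Y) + η X * η Y : C^(⊤ : ℕ∞)⟮I, M; ℝ⟯) =
      Real.sqrt ν • (g Y X - η Y * η X) + η Y * η X) ∧
    (∀ X (x : M), 0 ≤ (Real.sqrt ν • (g X X - η X * η X) + η X * η X : C^(⊤ : ℕ∞)⟮I, M; ℝ⟯) x) ∧
    (∀ X Y,
      (Real.sqrt ν • (g ((Real.sqrt ν)⁻¹ • φ X) ((Real.sqrt ν)⁻¹ • φ Y) -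
          η ((Real.sqrt ν)⁻¹ • φ X) * η ((Real.sqrt ν)⁻¹ • φ Y)) +
        η ((Real.sqrt ν)⁻¹ • φ X) * η ((Real.sqrt ν)⁻¹ • φ Y) : C^(⊤ : ℕ∞)⟮I, M; ℝ⟯) =
      (Real.sqrt ν • (g X Y - η X * η Y) + η X * η Y) - η X * η Y) ∧
    (∀ X Y,
      (Real.sqrt ν • (g X ((Real.sqrt ν)⁻¹ • φ Y) - η X * η ((Real.sqrt ν)⁻¹ • φ Y)) +
        η X * η ((Real.sqrt ν)⁻¹ • φ Y) : C^(⊤ : ℕ∞)⟮I, M; ℝ⟯) = dEta η X Y) ∧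
    (∀ X Y, nijenhuis (fun Z => (Real.sqrt ν)⁻¹ • φ Z) X Y +
      ((2 : ℝ) • dEta η X Y) • ξ = 0) := by
  have hν0 : ν ≠ 0 := ne_of_gt hν
  have hss : Real.sqrt ν * Real.sqrt ν = ν := Real.mul_self_sqrt hν.le
  have hs0 : Real.sqrt ν ≠ 0 := by
    intro h; rw [h, mul_zero] at hss; exact hν0 hss.symm
  -- φ²ξ = 0
  have hφφξ : φ (φ ξ) = 0 := by
    have h := hφφ ξ
    rw [hηξ, one_smul] at h
    rw [h]; abel
  -- η of the "horizontal part" vanishes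
  have hker : ∀ X : VectorField I M, η (X - η X • ξ) = 0 := by
    intro X
    rw [map_sub, map_smul, hηξ, smul_eq_mul _, mul_one, sub_self]
  -- η (φ X) = η X * η (φ ξ)
  have hc : ∀ X : VectorField I M, η (φ X) = η X * η (φ ξ) := by
    intro X
    have h0 : η (φ (X - η X • ξ)) = 0 := hD _ (hker X)
    have hdec : φ X = φ (X - η X • ξ) + η X • φ ξ := by
      rw [map_sub, map_smul]; abel
    rw [hdec, map_add, h0, zero_add, map_smul, smul_eq_mul _]
  -- η (φ ξ) = 0
  have hcξ : η (φ ξ) = 0 := by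
    have h2 : η (φ ξ) * η (φ ξ) = 0 := by
      have := hc (φ ξ)
      rw [hφφξ, map_zero] at this
      exact this.symm
    ext x
    have : (η (φ ξ) * η (φ ξ)) x = 0 := by rw [h2]; simp
    have hx : η (φ ξ) x * η (φ ξ) x = 0 := by simpa using this
    simpa using mul_self_eq_zero.mp hx
  -- η ∘ φ = 0
  have hηφ : ∀ X, η (φ X) = 0 := by
    intro X; rw [hc X, hcξ, mul_zero]
  -- η (Q ξ) = ν • 1
  have hηQξ : η (Q ξ) = ν • (1 : C^(⊤ : ℕ∞)⟮I, M; ℝ⟯) := by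
    rw [hQξ, LinearMap.map_smul_of_tower, hηξ]
  -- η (Q X) = ν • η X
  have hηQ : ∀ X, η (Q X) = ν • η X := by
    intro X
    have h := congrArg (⇑η) (hφφ X)
    rw [hηφ, map_add, map_neg, map_smul, hηQξ] at h
    have : η (Q X) = η X • (ν • (1 : C^(⊤ : ℕ∞)⟮I, M; ℝ⟯)) := by
      have := h.symm
      rw [neg_add_eq_zero] at this
      · exact this
    rw [this, smul_comm, smul_eq_mul _, mul_one]
  -- η applied to N1 = 0 : η [φX, φY] = -( (2*ν) • dEta X Y )
  have hbr : ∀ X Y, η ⁅φ X, φ Y⁆ = -((2 * ν) • dEta η X Y) := by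
    intro X Y
    have h := congrArg (⇑η) (hN1 X Y)
    simp only [N1, nijenhuis, map_add, map_sub, map_zero, map_smul, hηφ] at h
    rw [hηQξ] at h
    have h2 : η ⁅φ X, φ Y⁆ + ((2 : ℝ) • dEta η X Y) • (ν • (1 : C^(⊤ : ℕ∞)⟮I, M; ℝ⟯)) = 0 := by
      calc η ⁅φ X, φ Y⁆ + ((2 : ℝ) • dEta η X Y) • (ν • (1 : C^(⊤ : ℕ∞)⟮I, M; ℝ⟯))
          = 0 + η ⁅φ X, φ Y⁆ - 0 - 0 + ((2 : ℝ) • dEta η X Y) • (ν • (1 : C^(⊤ : ℕ∞)⟮I, M; ℝ⟯)) := by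
            abel
        _ = 0 := h
    have h3 : ((2 : ℝ) • dEta η X Y) • (ν • (1 : C^(⊤ : ℕ∞)⟮I, M; ℝ⟯)) = (2 * ν) • dEta η X Y := by
      rw [smul_comm, smul_eq_mul _, mul_one, smul_smul, mul_comm ν 2]
    rw [h3] at h2
    exact eq_neg_of_add_eq_zero_left h2
  have hinv : (Real.sqrt ν)⁻¹ * (Real.sqrt ν)⁻¹ * ν = 1 := by
    rw [← hss]; field_simp
    rw [Real.sqrt_sq (Real.sqrt_nonneg _)]
  -- dEta (φX) (φY) = ν • dEta X Y
  have hdφ : ∀ X Y, dEta η (φ X) (φ Y) = ν • dEta η X Y := by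
    intro X Y
    have e : dEta η (φ X) (φ Y)
        = (2 : ℝ)⁻¹ • ((φ X) (η (φ Y)) - (φ Y) (η (φ X)) - η ⁅φ X, φ Y⁆) := rfl
    rw [e, hηφ, hηφ, hbr, map_zero, map_zero]
    module
  -- Q ∘ φ = ν • φ
  have hQφ : ∀ Y, Q (φ Y) = ν • φ Y := by
    intro Y
    have h1 : ∀ X, g X (Q (φ Y) - ν • φ Y) = 0 := by
      intro X
      have e1 : g (φ X) (φ (φ Y)) = dEta η (φ X) (φ Y) := hcontact (φ X) (φ Y)
      rw [hdφ, ← hcontact X Y] at e1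
      have e2 : g (φ X) (φ (φ Y)) = g X (Q (φ Y)) - η X * η (Q (φ Y)) := hcompat X (φ Y)
      rw [hηQ, hηφ, smul_zero, mul_zero, sub_zero] at e2
      have e3 : g X (Q (φ Y)) = ν • g X (φ Y) := by rw [← e2, e1]
      rw [map_sub, e3, LinearMap.map_smul_of_tower, sub_self]
    have h2 := h1 (Q (φ Y) - ν • φ Y)
    exact sub_eq_zero.mp (hg_def _ h2)
  -- Q = ν • id
  have hQid : ∀ Z, Q Z = ν • Z := by
    intro Z
    have hη0 : η (Z - η Z • ξ) = 0 := hker Z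
    have h1 : φ (φ (Z - η Z • ξ)) = -(Q (Z - η Z • ξ)) := by
      rw [hφφ _, hη0, zero_smul, add_zero]
    have h2 : Q (Q (Z - η Z • ξ)) = ν • Q (Z - η Z • ξ) := by
      have h' : Q (φ (φ (Z - η Z • ξ))) = ν • φ (φ (Z - η Z • ξ)) := hQφ (φ (Z - η Z • ξ))
      rw [h1, map_neg, smul_neg] at h'
      exact neg_injective h'
    have h3 : Q (Q (Z - η Z • ξ) - ν • (Z - η Z • ξ)) = 0 := by
      rw [map_sub, h2, LinearMap.map_smul_of_tower, sub_self]
    have h4 : Q (Z - η Z • ξ) = ν • (Z - η Z • ξ) := by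
      have := hQ.injective (h3.trans (map_zero Q).symm)
      exact sub_eq_zero.mp this
    have h5 : (Z - η Z • ξ) + η Z • ξ = Z := by abel
    calc Q Z = Q (Z - η Z • ξ) + η Z • Q ξ := by rw [← map_smul, ← map_add, h5]
      _ = ν • (Z - η Z • ξ) + η Z • (ν • ξ) := by rw [h4, hQξ]
      _ = ν • ((Z - η Z • ξ) + η Z • ξ) := by rw [smul_comm (η Z) ν ξ, smul_add]
      _ = ν • Z := by rw [h5]
  -- φ ξ = 0
  have hφξ : φ ξ = 0 := by
    have h := hcompat (φ ξ) (φ ξ)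
    simp only [hφφξ, hQid, LinearMap.map_smul_of_tower, hηφ, smul_zero, mul_zero,
      sub_zero, map_zero, LinearMap.zero_apply] at h
    have h0 : g (φ ξ) (φ ξ) = 0 := by
      rcases smul_eq_zero.mp h.symm with h' | h'
      · exact absurd h' hν0
      · exact h'
    exact hg_def _ h0
  -- g X ξ = η X
  have hgξ : ∀ X, g X ξ = η X := by
    intro X
    have h := hcompat X ξ
    rw [hφξ, map_zero, hQξ] at h
    rw [LinearMap.map_smul_of_tower, LinearMap.map_smul_of_tower, hηξ] at h
    ext x
    have hx := DFunLike.congr_fun h x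
    simp at hx
    have h2 : ν * (((g X) ξ) x - (η X) x) = 0 := by linear_combination -hx
    have h3 := (mul_eq_zero.mp h2).resolve_left hν0
    linarith [h3]
  have hgξξ : g ξ ξ = 1 := by rw [hgξ, hηξ]
  -- pointwise Cauchy–Schwarz against ξ
  have hCS : ∀ X (x : M), (η X) x * (η X) x ≤ ((g X) X) x := by
    intro X x
    have hp := hg_pos (X + (-((η X) x)) • ξ) x
    simp only [map_add, LinearMap.map_smul_of_tower, LinearMap.add_apply,
      LinearMap.smul_apply, hg_symm ξ X, hgξ, hgξξ] at hp
    simp [hηξ] at hp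
    linarith
  refine ⟨hQid, ?_, ?_, ?_, ?_, ?_, ?_⟩
  · -- φ'² = -id + η ⊗ ξ
    intro X
    rw [LinearMap.map_smul_of_tower, smul_smul, hφφ X, hQid X, hQξ,
      smul_comm (η X) ν ξ, smul_add, smul_neg, smul_smul, smul_smul, hinv, one_smul, one_smul]
  · -- symmetry of g'
    intro X Y
    rw [hg_symm X Y, mul_comm (η X) (η Y)]
  · -- positivity of g'
    intro X x
    have h := hCS X x
    have hs_nonneg : (0:ℝ) ≤ Real.sqrt ν := Real.sqrt_nonneg ν
    simp
    nlinarith [h, hs_nonneg]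
  · -- compatibility of g' with φ'
    intro X Y
    have hφg : g (φ X) (φ Y) = ν • (g X Y - η X * η Y) := by
      rw [hcompat, hQid Y, LinearMap.map_smul_of_tower, LinearMap.map_smul_of_tower,
        mul_smul_comm, ← smul_sub]
    simp only [LinearMap.map_smul_of_tower, LinearMap.smul_apply, hηφ, smul_zero,
      mul_zero, sub_zero, add_zero, hφg, smul_smul]
    have hcoef : Real.sqrt ν * ((Real.sqrt ν)⁻¹ * ((Real.sqrt ν)⁻¹ * ν)) = Real.sqrt ν := by
      rw [← hss]; field_simp
      rw [Real.sqrt_sq (Real.sqrt_nonneg _)]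
    rw [hcoef]
    abel
  · -- g'(X, φ'Y) = dη(X,Y)
    intro X Y
    simp only [LinearMap.map_smul_of_tower, hηφ, smul_zero, mul_zero, sub_zero, add_zero,
      smul_smul]
    rw [mul_inv_cancel₀ hs0, one_smul, hcontact]
  · -- normality of the rescaled structure
    intro X Y
    have hN := hN1 X Y
    rw [N1] at hN
    have hnij : nijenhuis (fun Z => (Real.sqrt ν)⁻¹ • φ Z) X Y
        = ((Real.sqrt ν)⁻¹ * (Real.sqrt ν)⁻¹) • nijenhuis ⇑φ X Y := by
      have lsmul : ∀ (r : ℝ) (W1 W2 : VectorField I M), ⁅r • W1, W2⁆ = r • ⁅W1, W2⁆ :=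
        fun r W1 W2 => smul_lie r W1 W2
      have rsmul : ∀ (r : ℝ) (W1 W2 : VectorField I M), ⁅W1, r • W2⁆ = r • ⁅W1, W2⁆ :=
        fun r W1 W2 => lie_smul r W1 W2
      simp only [nijenhuis]
      rw [lsmul, rsmul, lsmul, rsmul, LinearMap.map_smul_of_tower,
        LinearMap.map_smul_of_tower, LinearMap.map_smul_of_tower]
      simp only [smul_smul]
      rw [← smul_add, ← smul_sub, ← smul_sub]
    rw [hnij]
    rw [hQξ] at hN
    rw [smul_comm ((2:ℝ) • dEta η X Y) ν ξ] at hN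
    have hval : nijenhuis ⇑φ X Y = -(ν • (((2:ℝ) • dEta η X Y) • ξ)) :=
      eq_neg_of_add_eq_zero_left hN
    rw [hval, smul_neg, smul_smul, hinv, one_smul]
    exact neg_add_cancel _
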